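/- Let P₁ = (0,0,0), P₂ = (a,b,0) with (a,b) ≠ (0,0). A point (x,y,z) with z ≠ 0 is translation-equidistant from P₁ and P₂ if and only if e^{2z}·a(a - 2x) + b(b - 2y) = 0; and a point (x,y,0) is translation-equidistant from P₁ and P₂ if and only if x·a + y·b = (a² + b²)/2. -/

import Mathlib

/-- Translation distance from the origin to `(x,y,z)` in Sol. -/
noncomputable def solDistO (p : ℝ × ℝ × ℝ) : ℝ :=
  if p.2.2 ≠ 0 then
    (|p.2.2| / |Real.exp p.2.2 - 1|) *
      Real.sqrt (p.1 ^ 2 * Real.exp (2 * p.2.2) + (Real.exp p.2.2 - 1) ^ 2 + p.2.1 ^ 2)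
  else Real.sqrt (p.1 ^ 2 + p.2.1 ^ 2)

/-- Translation distance between two points of Sol, computed as `d^t(O, T⁻¹_P(Q))`. -/
noncomputable def solDist (P Q : ℝ × ℝ × ℝ) : ℝ :=
  solDistO ((Q.1 - P.1) * Real.exp P.2.2, (Q.2.1 - P.2.1) * Real.exp (-P.2.2), Q.2.2 - P.2.2)

lemma exp_ne_one_of_ne_zero {z : ℝ} (hz : z ≠ 0) : Real.exp z ≠ 1 := by
  intro h
  exact hz (by simpa using Real.exp_eq_exp.mp (by simpa using h))

lemma solDist_right (a b x y z : ℝ) (hz : z ≠ 0) :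
    solDist (x, y, z) (a, b, 0) =
      (|z| / |Real.exp z - 1|) *
        Real.sqrt ((a - x) ^ 2 * Real.exp (2 * z) + (Real.exp z - 1) ^ 2 + (b - y) ^ 2) := by
  have hez : Real.exp z ≠ 1 := exp_ne_one_of_ne_zero hz
  have hpos : (0:ℝ) < Real.exp (-z) := Real.exp_pos _
  have hzz : (0:ℝ) - z ≠ 0 := by simpa using fun h => hz (by linarith)
  simp only [solDist, solDistO, hzz, if_pos, ne_eq, not_false_iff, if_true]
  have hB : (0:ℝ) ≤ (a - x) ^ 2 * Real.exp (2 * z) + (Real.exp z - 1) ^ 2 + (b - y) ^ 2 := by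
    positivity
  have e1 : Real.exp (0 - z) - 1 = (1 - Real.exp z) * Real.exp (-z) := by
    rw [sub_mul, one_mul, ← Real.exp_add]
    ring_nf
    simp [Real.exp_zero]
    ring
  have habs : |Real.exp (0 - z) - 1| = |Real.exp z - 1| * Real.exp (-z) := by
    rw [e1, abs_mul, abs_of_pos hpos, abs_sub_comm]
  have hinner : ((a - x) * Real.exp z) ^ 2 * Real.exp (2 * (0 - z)) +
      (Real.exp (0 - z) - 1) ^ 2 + ((b - y) * Real.exp (-z)) ^ 2 =
      ((a - x) ^ 2 * Real.exp (2 * z) + (Real.exp z - 1) ^ 2 + (b - y) ^ 2)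
        * (Real.exp (-z)) ^ 2 := by
    rw [e1]
    have h2 : Real.exp (2 * (0 - z)) = Real.exp (-z) ^ 2 := by
      rw [← Real.exp_nat_mul]; ring_nf
    have h3 : Real.exp (2 * z) = Real.exp z ^ 2 := by
      rw [← Real.exp_nat_mul]; ring_nf
    have h4 : Real.exp z * Real.exp (-z) = 1 := by
      rw [← Real.exp_add]; simp
    rw [h2, h3]
    nlinarith [h4, sq_nonneg (Real.exp z), sq_nonneg (Real.exp (-z))]
  rw [hinner, habs, Real.sqrt_mul hB, Real.sqrt_sq hpos.le]
  have habz : |(0:ℝ) - z| = |z| := by rw [zero_sub, abs_neg]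
  rw [habz]
  have hne : |Real.exp z - 1| ≠ 0 := abs_ne_zero.mpr (sub_ne_zero.mpr hez)
  field_simp

/-- Equation of the translation-like bisector surface of the origin and `(a,b,0)`. -/
theorem sol_bisector_horizontal (a b : ℝ) (hab : (a, b) ≠ ((0 : ℝ), (0 : ℝ))) :
    (∀ x y z : ℝ, z ≠ 0 →
      (solDist ((0 : ℝ), (0 : ℝ), (0 : ℝ)) (x, y, z) = solDist (x, y, z) (a, b, 0) ↔
        Real.exp (2 * z) * a * (a - 2 * x) + b * (b - 2 * y) = 0)) ∧
    (∀ x y : ℝ,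
      (solDist ((0 : ℝ), (0 : ℝ), (0 : ℝ)) (x, y, 0) = solDist (x, y, 0) (a, b, 0) ↔
        x * a + y * b = (a ^ 2 + b ^ 2) / 2)) := by
  constructor
  · intro x y z hz
    have hez : Real.exp z ≠ 1 := exp_ne_one_of_ne_zero hz
    have hL : solDist ((0 : ℝ), (0 : ℝ), (0 : ℝ)) (x, y, z) =
        (|z| / |Real.exp z - 1|) *
          Real.sqrt (x ^ 2 * Real.exp (2 * z) + (Real.exp z - 1) ^ 2 + y ^ 2) := by
      simp [solDist, solDistO, hz]
    rw [hL, solDist_right a b x y z hz]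
    have hc : (0:ℝ) < |z| / |Real.exp z - 1| := by
      apply div_pos (abs_pos.mpr hz) (abs_pos.mpr (sub_ne_zero.mpr hez))
    rw [mul_right_inj' (ne_of_gt hc)]
    rw [Real.sqrt_inj (by positivity) (by positivity)]
    constructor
    · intro h
      have h3 : Real.exp (2 * z) = Real.exp z ^ 2 := by
        rw [← Real.exp_nat_mul]; ring_nf
      nlinarith [h]
    · intro h
      nlinarith [h]
  · intro x y
    have h0 : solDist ((0 : ℝ), (0 : ℝ), (0 : ℝ)) (x, y, 0) = Real.sqrt (x ^ 2 + y ^ 2) := by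
      simp [solDist, solDistO]
    have h1 : solDist (x, y, 0) (a, b, 0) = Real.sqrt ((a - x) ^ 2 + (b - y) ^ 2) := by
      simp [solDist, solDistO]
    rw [h0, h1, Real.sqrt_inj (by positivity) (by positivity)]
    constructor
    · intro h; nlinarith [h]
    · intro h; nlinarith [h]
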